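/- arXiv:1304.5030 — 2 statements merged into one kernel-verified Lean document; each statement's English description precedes it below -/
import Mathlib

section
/- Under the hypotheses of the previous statement (with $0<\beta<\beta_0=\mu_2 S/(8b)$, $1/2<B_1,B_2<2$, $S/\sqrt2\le A_1,A_2\le b$, $0<D\le 2$, $\mu_1\ge\mu_2>0$), the solutions $t_i = (\mu_j B_j A_i - \beta A_j D)/(\mu_1\mu_2 B_1B_2 - \beta^2 D^2)$ (for $\{i,j\}=\{1,2\}$) satisfy the uniform bounds $t_i \ge S/(2^6\mu_1)$ and $t_i \le 2^9 b^3 \mu_1/(\mu_2^2 S^2)$ for $i=1,2$. -/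
set_option maxHeartbeats 1000000 in
lemma stmt_4_aux (μ₁ μ₂ S b β B₁ B₂ D N : ℝ)
    (hμ : μ₁ ≥ μ₂) (hμ₂ : 0 < μ₂) (hS : 0 < S) (hb : 0 < b)
    (hβpos : 0 < β) (hβb : 8 * (β * b) < μ₂ * S)
    (hB₁ : 1 / 2 < B₁) (hB₁' : B₁ < 2) (hB₂ : 1 / 2 < B₂) (hB₂' : B₂ < 2)
    (hSb : 2 * S ≤ 3 * b)
    (hD : 0 < D) (hD2 : D ≤ 2)
    (hNl : μ₂ * S / 12 < N) (hNh : N ≤ 2 * (μ₁ * b)) :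
    S / (2 ^ 6 * μ₁) ≤ N / (μ₁ * μ₂ * B₁ * B₂ - β ^ 2 * D ^ 2) ∧
    N / (μ₁ * μ₂ * B₁ * B₂ - β ^ 2 * D ^ 2) ≤ 2 ^ 9 * b ^ 3 * μ₁ / (μ₂ ^ 2 * S ^ 2) := by
  have hμ₁ : 0 < μ₁ := lt_of_lt_of_le hμ₂ hμ
  have hβμ : 16 * β < 3 * μ₂ := by nlinarith [hβb, hSb, hβpos, hb]
  set d : ℝ := μ₁ * μ₂ * B₁ * B₂ - β ^ 2 * D ^ 2 with hd
  clear_value d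
  have hdlow : μ₁ * μ₂ / 10 < d := by
    have h1 : β * D < 3 * μ₂ / 8 := by nlinarith [hβμ, hD2, hβpos]
    have h2 : β ^ 2 * D ^ 2 < 9 * (μ₁ * μ₂) / 64 := by
      have hbd : 0 < β * D := mul_pos hβpos hD
      have hsq := mul_self_lt_mul_self hbd.le h1
      have hmm : μ₂ * μ₂ ≤ μ₁ * μ₂ := mul_le_mul_of_nonneg_right hμ hμ₂.le
      nlinarith [hsq, hmm]
    have h3 : μ₁ * μ₂ / 4 < μ₁ * μ₂ * B₁ * B₂ := by
      have hp : 0 < μ₁ * μ₂ := mul_pos hμ₁ hμ₂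
      nlinarith [mul_pos hp (mul_pos (sub_pos.mpr hB₁) (sub_pos.mpr hB₂)),
        mul_pos hp (sub_pos.mpr hB₁), mul_pos hp (sub_pos.mpr hB₂)]
    rw [hd]; linarith [mul_pos hμ₁ hμ₂]
  have hdpos : 0 < d := lt_trans (by positivity) hdlow
  have hdhigh : d < 4 * (μ₁ * μ₂) := by
    have hp : 0 < μ₁ * μ₂ := mul_pos hμ₁ hμ₂
    have hq : 0 < β ^ 2 * D ^ 2 := by positivity
    have hB1p : (0:ℝ) < B₁ := by linarith
    rw [hd]
    nlinarith [hq, mul_pos (mul_pos hp hB1p) (sub_pos.mpr hB₂'),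
      mul_pos hp (sub_pos.mpr hB₁')]
  have hμ₂S : (0:ℝ) < μ₂ ^ 2 * S ^ 2 := by positivity
  constructor
  · rw [div_le_div_iff₀ (by positivity) hdpos]
    nlinarith [mul_lt_mul_of_pos_left hdhigh hS, mul_lt_mul_of_pos_left hNl hμ₁,
      mul_pos (mul_pos hμ₁ hμ₂) hS]
  · rw [div_le_div_iff₀ hdpos hμ₂S]
    have h1 : N * (μ₂ ^ 2 * S ^ 2) ≤ 2 * (μ₁ * b) * (μ₂ ^ 2 * S ^ 2) :=
      mul_le_mul_of_nonneg_right hNh (le_of_lt hμ₂S)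
    have h2 : S ^ 2 ≤ 9 / 4 * b ^ 2 := by nlinarith [hSb, hS, hb]
    have h3 : 2 * (μ₁ * b) * (μ₂ ^ 2 * S ^ 2) ≤ 2 * (μ₁ * b) * (μ₂ ^ 2 * (9 / 4 * b ^ 2)) := by
      have hc : (0:ℝ) ≤ 2 * (μ₁ * b) * μ₂ ^ 2 := by positivity
      nlinarith [hc, h2]
    have h4 : 2 ^ 9 * b ^ 3 * μ₁ * (μ₁ * μ₂ / 10) ≤ 2 ^ 9 * b ^ 3 * μ₁ * d := by
      have hc : (0:ℝ) ≤ 2 ^ 9 * b ^ 3 * μ₁ := by positivity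
      nlinarith [hc, hdlow]
    have h5 : 2 * (μ₁ * b) * (μ₂ ^ 2 * (9 / 4 * b ^ 2)) ≤ 2 ^ 9 * b ^ 3 * μ₁ * (μ₁ * μ₂ / 10) := by
      nlinarith [hμ, hμ₂, hb, mul_pos hμ₁ hμ₂, pow_pos hb 3,
        mul_le_mul_of_nonneg_left hμ hμ₂.le]
    linarith

set_option maxHeartbeats 1000000 in
theorem stmt_4 (μ₁ μ₂ S b β A₁ A₂ B₁ B₂ D : ℝ)
    (hμ : μ₁ ≥ μ₂) (hμ₂ : 0 < μ₂) (hS : 0 < S) (hb : 0 < b)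
    (hβpos : 0 < β) (hβ : β < μ₂ * S / (8 * b))
    (hB₁ : 1 / 2 < B₁) (hB₁' : B₁ < 2) (hB₂ : 1 / 2 < B₂) (hB₂' : B₂ < 2)
    (hA₁b : A₁ ≤ b) (hA₂b : A₂ ≤ b)
    (hA₁S : S / Real.sqrt 2 ≤ A₁) (hA₂S : S / Real.sqrt 2 ≤ A₂)
    (hD : 0 < D) (hD2 : D ≤ 2) :
    let t₁ := (μ₂ * B₂ * A₁ - β * A₂ * D) / (μ₁ * μ₂ * B₁ * B₂ - β ^ 2 * D ^ 2)
    let t₂ := (μ₁ * B₁ * A₂ - β * A₁ * D) / (μ₁ * μ₂ * B₁ * B₂ - β ^ 2 * D ^ 2)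
    (S / (2 ^ 6 * μ₁) ≤ t₁ ∧ t₁ ≤ 2 ^ 9 * b ^ 3 * μ₁ / (μ₂ ^ 2 * S ^ 2)) ∧
    (S / (2 ^ 6 * μ₁) ≤ t₂ ∧ t₂ ≤ 2 ^ 9 * b ^ 3 * μ₁ / (μ₂ ^ 2 * S ^ 2)) := by
  intro t₁ t₂
  have hμ₁ : 0 < μ₁ := lt_of_lt_of_le hμ₂ hμ
  have hr2pos : 0 < Real.sqrt 2 := Real.sqrt_pos.mpr (by norm_num)
  have hr2 : Real.sqrt 2 ≤ 3 / 2 := by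
    nlinarith [Real.sq_sqrt (by norm_num : (0:ℝ) ≤ 2), Real.sqrt_nonneg 2]
  have hA1 : 2 * S ≤ 3 * A₁ := by
    rw [div_le_iff₀ hr2pos] at hA₁S
    nlinarith [hA₁S, hr2, hS]
  have hA2 : 2 * S ≤ 3 * A₂ := by
    rw [div_le_iff₀ hr2pos] at hA₂S
    nlinarith [hA₂S, hr2, hS]
  have hA1pos : 0 < A₁ := by linarith
  have hA2pos : 0 < A₂ := by linarith
  have hSb : 2 * S ≤ 3 * b := by linarith
  have hβb : 8 * (β * b) < μ₂ * S := by
    rw [lt_div_iff₀ (by positivity : (0:ℝ) < 8 * b)] at hβ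
    nlinarith [hβ]
  have hnum1_low : μ₂ * S / 12 < μ₂ * B₂ * A₁ - β * A₂ * D := by
    nlinarith [hβb, mul_nonneg (mul_nonneg hμ₂.le (by linarith : (0:ℝ) ≤ B₂ - 1/2)) hA1pos.le,
      mul_nonneg hμ₂.le (by linarith : (0:ℝ) ≤ 3 * A₁ - 2 * S),
      mul_nonneg (mul_nonneg hβpos.le (sub_nonneg.mpr hA₂b)) hD.le,
      mul_nonneg (mul_nonneg hβpos.le hb.le) (by linarith : (0:ℝ) ≤ 2 - D)]
  have hnum2_low : μ₂ * S / 12 < μ₁ * B₁ * A₂ - β * A₁ * D := by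
    nlinarith [hβb, mul_nonneg (mul_nonneg hμ₁.le (by linarith : (0:ℝ) ≤ B₁ - 1/2)) hA2pos.le,
      mul_nonneg hμ₁.le (by linarith : (0:ℝ) ≤ 3 * A₂ - 2 * S),
      mul_nonneg (sub_nonneg.mpr hμ) hS.le,
      mul_nonneg (mul_nonneg hβpos.le (sub_nonneg.mpr hA₁b)) hD.le,
      mul_nonneg (mul_nonneg hβpos.le hb.le) (by linarith : (0:ℝ) ≤ 2 - D)]
  have hnum1_high : μ₂ * B₂ * A₁ - β * A₂ * D ≤ 2 * (μ₁ * b) := by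
    nlinarith [mul_pos (mul_pos hβpos hA2pos) hD,
      mul_nonneg (mul_nonneg hμ₂.le (by linarith : (0:ℝ) ≤ 2 - B₂)) hA1pos.le,
      mul_nonneg hμ₂.le (sub_nonneg.mpr hA₁b),
      mul_nonneg (sub_nonneg.mpr hμ) hb.le]
  have hnum2_high : μ₁ * B₁ * A₂ - β * A₁ * D ≤ 2 * (μ₁ * b) := by
    nlinarith [mul_pos (mul_pos hβpos hA1pos) hD,
      mul_nonneg (mul_nonneg hμ₁.le (by linarith : (0:ℝ) ≤ 2 - B₁)) hA2pos.le,
      mul_nonneg hμ₁.le (sub_nonneg.mpr hA₂b)]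
  exact ⟨stmt_4_aux μ₁ μ₂ S b β B₁ B₂ D _ hμ hμ₂ hS hb hβpos hβb hB₁ hB₁' hB₂ hB₂'
      hSb hD hD2 hnum1_low hnum1_high,
    stmt_4_aux μ₁ μ₂ S b β B₁ B₂ D _ hμ hμ₂ hS hb hβpos hβb hB₁ hB₁' hB₂ hB₂'
      hSb hD hD2 hnum2_low hnum2_high⟩
end

section
/- Let $\mu_1,\mu_2,\beta>0$ and positive reals $A_1,A_2,B_1,B_2,D$ with $B_1=B_2=1$, $\mu_1\mu_2 - \beta^2 D^2 > 0$, $D\le 2$, $A_1,A_2\le b$, and suppose $\mu_1\mu_2-\beta^2D^2 \ge \mu_2^2 S^2/(2^8 b^2)$ for some $S>0$. Define $J = \tfrac14\frac{\mu_2 A_1^2 - 2\beta A_1 A_2 D + \mu_1 A_2^2}{\mu_1\mu_2 - \beta^2 D^2}$ and $I = \frac{A_1^2}{4\mu_1} + \frac{A_2^2}{4\mu_2}$. Then $|J - I| \le C\beta$ where $C>0$ is a constant depending only on $\mu_1,\mu_2,b,S$ (and not on $A_1,A_2,D,\beta$). Explicitly, $|J-I| = \frac{\beta\,|\beta D^2(A_1^2/\mu_1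 + A_2^2/\mu_2) - 2A_1A_2 D|}{4(\mu_1\mu_2-\beta^2D^2)}$. -/
set_option maxHeartbeats 1000000 in

theorem stmt_5 (μ₁ μ₂ b S : ℝ) (hμ₁ : 0 < μ₁) (hμ₂ : 0 < μ₂) (hb : 0 < b) (hS : 0 < S) :
    ∃ C : ℝ, 0 < C ∧
      ∀ β A₁ A₂ D : ℝ, 0 < β → 0 < A₁ → 0 < A₂ → 0 < D →
        D ≤ 2 → A₁ ≤ b → A₂ ≤ b →
        0 < μ₁ * μ₂ - β ^ 2 * D ^ 2 →
        μ₂ ^ 2 * S ^ 2 / (2 ^ 8 * b ^ 2) ≤ μ₁ * μ₂ - β ^ 2 * D ^ 2 →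
        (let J := (1 / 4) * (μ₂ * A₁ ^ 2 - 2 * β * A₁ * A₂ * D + μ₁ * A₂ ^ 2)
            / (μ₁ * μ₂ - β ^ 2 * D ^ 2)
         let I := A₁ ^ 2 / (4 * μ₁) + A₂ ^ 2 / (4 * μ₂)
         |J - I| = β * |β * D ^ 2 * (A₁ ^ 2 / μ₁ + A₂ ^ 2 / μ₂) - 2 * A₁ * A₂ * D|
            / (4 * (μ₁ * μ₂ - β ^ 2 * D ^ 2)) ∧
         |J - I| ≤ C * β) := by
  set N : ℝ := 2 * Real.sqrt (μ₁ * μ₂) * b ^ 2 * (1 / μ₁ + 1 / μ₂) + 4 * b ^ 2 with hN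
  have hNpos : 0 < N := by
    have : 0 < Real.sqrt (μ₁ * μ₂) := Real.sqrt_pos.mpr (by positivity)
    positivity
  set Δmin : ℝ := μ₂ ^ 2 * S ^ 2 / (2 ^ 8 * b ^ 2) with hΔmin
  have hΔminpos : 0 < Δmin := by positivity
  refine ⟨N / (4 * Δmin), by positivity, ?_⟩
  intro β A₁ A₂ D hβ hA₁ hA₂ hD hD2 hA₁b hA₂b hΔ hΔge
  set Δ : ℝ := μ₁ * μ₂ - β ^ 2 * D ^ 2 with hΔdef
  set X : ℝ := β * D ^ 2 * (A₁ ^ 2 / μ₁ + A₂ ^ 2 / μ₂) - 2 * A₁ * A₂ * D with hX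
  have key : (1 / 4) * (μ₂ * A₁ ^ 2 - 2 * β * A₁ * A₂ * D + μ₁ * A₂ ^ 2) / Δ
      - (A₁ ^ 2 / (4 * μ₁) + A₂ ^ 2 / (4 * μ₂)) = β * X / (4 * Δ) := by
    have hΔne : μ₁ * μ₂ - β ^ 2 * D ^ 2 ≠ 0 := ne_of_gt hΔ
    rw [hX, hΔdef]
    rw [div_sub' hΔne, div_eq_div_iff hΔne (by positivity)]
    field_simp
    ring
  have habs : |(1 / 4) * (μ₂ * A₁ ^ 2 - 2 * β * A₁ * A₂ * D + μ₁ * A₂ ^ 2) / Δ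
      - (A₁ ^ 2 / (4 * μ₁) + A₂ ^ 2 / (4 * μ₂))| = β * |X| / (4 * Δ) := by
    rw [key, abs_div, abs_mul, abs_of_pos hβ, abs_of_pos (by linarith : (0:ℝ) < 4 * Δ)]
  refine ⟨habs, ?_⟩
  rw [habs]
  -- bound |X| ≤ N
  have hβD : β * D ≤ Real.sqrt (μ₁ * μ₂) := by
    have h1 : (β * D) ^ 2 ≤ μ₁ * μ₂ := by nlinarith
    have := Real.sqrt_le_sqrt h1
    rwa [Real.sqrt_sq (by positivity)] at this
  have hXle : |X| ≤ N := by
    have hsum : A₁ ^ 2 / μ₁ + A₂ ^ 2 / μ₂ ≤ b ^ 2 * (1 / μ₁ + 1 / μ₂) := by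
      have h1 : A₁ ^ 2 ≤ b ^ 2 := by nlinarith
      have h2 : A₂ ^ 2 ≤ b ^ 2 := by nlinarith
      calc A₁ ^ 2 / μ₁ + A₂ ^ 2 / μ₂ ≤ b ^ 2 / μ₁ + b ^ 2 / μ₂ := by gcongr
        _ = b ^ 2 * (1 / μ₁ + 1 / μ₂) := by ring
    rw [abs_le]
    constructor
    · have hab : A₁ * A₂ ≤ b ^ 2 := by nlinarith
      have h1 : 2 * A₁ * A₂ * D ≤ 4 * b ^ 2 := by
        nlinarith [mul_nonneg (sub_nonneg.mpr hab) (sub_nonneg.mpr hD2), mul_pos hA₁ hA₂]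
      have h2 : 0 ≤ β * D ^ 2 * (A₁ ^ 2 / μ₁ + A₂ ^ 2 / μ₂) := by positivity
      have h3 : 0 ≤ 2 * Real.sqrt (μ₁ * μ₂) * b ^ 2 * (1 / μ₁ + 1 / μ₂) := by
        have : 0 ≤ Real.sqrt (μ₁ * μ₂) := Real.sqrt_nonneg _
        positivity
      rw [hX, hN]; linarith
    · have h1 : β * D ^ 2 * (A₁ ^ 2 / μ₁ + A₂ ^ 2 / μ₂)
          ≤ 2 * Real.sqrt (μ₁ * μ₂) * b ^ 2 * (1 / μ₁ + 1 / μ₂) := by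
        have hpos : 0 ≤ A₁ ^ 2 / μ₁ + A₂ ^ 2 / μ₂ := by positivity
        have h2 : β * D ^ 2 ≤ 2 * Real.sqrt (μ₁ * μ₂) := by
          nlinarith [mul_nonneg (sub_nonneg.mpr hβD) (sub_nonneg.mpr hD2), Real.sqrt_nonneg (μ₁ * μ₂), mul_pos hβ hD]
        calc β * D ^ 2 * (A₁ ^ 2 / μ₁ + A₂ ^ 2 / μ₂)
            ≤ 2 * Real.sqrt (μ₁ * μ₂) * (A₁ ^ 2 / μ₁ + A₂ ^ 2 / μ₂) :=
              mul_le_mul_of_nonneg_right h2 hpos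
          _ ≤ 2 * Real.sqrt (μ₁ * μ₂) * (b ^ 2 * (1 / μ₁ + 1 / μ₂)) := by
              have : 0 ≤ Real.sqrt (μ₁ * μ₂) := Real.sqrt_nonneg _
              apply mul_le_mul_of_nonneg_left hsum (by positivity)
          _ = 2 * Real.sqrt (μ₁ * μ₂) * b ^ 2 * (1 / μ₁ + 1 / μ₂) := by ring
      have h2 : 0 ≤ 2 * A₁ * A₂ * D := by positivity
      have h3 : (0:ℝ) ≤ 4 * b ^ 2 := by positivity
      rw [hX, hN]; linarith
  calc β * |X| / (4 * Δ) ≤ β * N / (4 * Δmin) := by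
        apply div_le_div₀ (by positivity) (by nlinarith [abs_nonneg X]) (by positivity)
        nlinarith
    _ = N / (4 * Δmin) * β := by ring
end
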